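/- (Property 6, part 2) Let n ≥ 1, let n₁ be an integer with 1 ≤ n₁ ≤ n, set β = n/n₁, and let σ₁, …, σₙ be positive reals and b₁, …, bₙ reals. Define G₂(ρ) = (Σᵢ₌₁ⁿ bᵢ²/(σᵢ²+ρ)²)·(Σⱼ₌₁^{n₁} σⱼ²(βσⱼ²+ρ)/(σⱼ²+ρ)²). Then G₂ is completely monotonic on (0, ∞): for every k ∈ ℕ and every ρ > 0, (−1)^k · G₂^{(k)}(ρ) ≥ 0, where G₂^{(k)} denotes the k-th derivative of G₂. -/

import Mathlib

/-- The subtracted part `G₂(ρ)` of the COPRA characteristic function `G = G₁ − G₂`. -/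
noncomputable def copraG₂ (n n₁ : ℕ) (σ b : ℕ → ℝ) (ρ : ℝ) : ℝ :=
  (∑ i ∈ Finset.range n, b i ^ 2 / (σ i ^ 2 + ρ) ^ 2) *
    (∑ j ∈ Finset.range n₁,
      σ j ^ 2 * (((n : ℝ) / n₁) * σ j ^ 2 + ρ) / (σ j ^ 2 + ρ) ^ 2)

/-- Pascal-style reindexing identity behind the Leibniz rule. -/
lemma leibniz_step (a b : ℕ → ℝ) (k : ℕ) :
    ∑ i ∈ Finset.range (k + 2), ((k + 1).choose i : ℝ) * a i * b (k + 1 - i)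
    = ∑ i ∈ Finset.range (k + 1),
        (k.choose i : ℝ) * (a (i + 1) * b (k - i) + a i * b (k - i + 1)) := by
  have hR : ∑ i ∈ Finset.range (k + 1),
      (k.choose i : ℝ) * (a (i + 1) * b (k - i) + a i * b (k - i + 1))
      = ∑ i ∈ Finset.range (k + 1), (k.choose i : ℝ) * a (i + 1) * b (k - i)
        + ∑ i ∈ Finset.range (k + 1), (k.choose i : ℝ) * a i * b (k - i + 1) := by
    rw [← Finset.sum_add_distrib]
    exact Finset.sum_congr rfl fun i _ => by ring
  have hL := Finset.sum_range_succ'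
    (fun i => ((k + 1).choose i : ℝ) * a i * b (k + 1 - i)) (k + 1)
  have hR2 := Finset.sum_range_succ'
    (fun i => (k.choose i : ℝ) * a i * b (k - i + 1)) k
  rw [hR, hL, hR2]
  have e1 : ∀ i ∈ Finset.range (k + 1),
      ((k + 1).choose (i + 1) : ℝ) * a (i + 1) * b (k + 1 - (i + 1))
      = (k.choose i : ℝ) * a (i + 1) * b (k - i)
        + (k.choose (i + 1) : ℝ) * a (i + 1) * b (k - i) := by
    intro i _
    rw [Nat.choose_succ_succ, show k + 1 - (i + 1) = k - i by omega]
    push_cast; ring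
  rw [Finset.sum_congr rfl e1, Finset.sum_add_distrib]
  have e2 : ∑ i ∈ Finset.range (k + 1), (k.choose (i + 1) : ℝ) * a (i + 1) * b (k - i)
      = ∑ i ∈ Finset.range k, (k.choose (i + 1) : ℝ) * a (i + 1) * b (k - (i + 1) + 1) := by
    rw [Finset.sum_range_succ, Nat.choose_succ_self]
    simp only [Nat.cast_zero, zero_mul, add_zero]
    exact Finset.sum_congr rfl fun i hi => by
      rw [Finset.mem_range] at hi
      congr 2
      omega
  rw [e2]
  simp only [Nat.choose_zero_right, Nat.cast_one, Nat.sub_zero, Nat.choose_self]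
  ring

/-- `D` is a chain of iterated derivatives for `f` on `(0, ∞)`. -/
def HasIterOn (f : ℝ → ℝ) (D : ℕ → ℝ → ℝ) : Prop :=
  (∀ ρ : ℝ, 0 < ρ → D 0 ρ = f ρ) ∧
    ∀ (k : ℕ) (ρ : ℝ), 0 < ρ → HasDerivAt (D k) (D (k + 1) ρ) ρ

lemma HasIterOn.congr {f g : ℝ → ℝ} {D : ℕ → ℝ → ℝ} (h : HasIterOn f D)
    (hfg : ∀ ρ : ℝ, 0 < ρ → f ρ = g ρ) : HasIterOn g D :=
  ⟨fun ρ hρ => (h.1 ρ hρ).trans (hfg ρ hρ), h.2⟩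

lemma HasIterOn.iteratedDeriv_eq {f : ℝ → ℝ} {D : ℕ → ℝ → ℝ} (h : HasIterOn f D) :
    ∀ (k : ℕ) (ρ : ℝ), 0 < ρ → iteratedDeriv k f ρ = D k ρ := by
  intro k
  induction k with
  | zero => intro ρ hρ; simpa [iteratedDeriv_zero] using (h.1 ρ hρ).symm
  | succ k ih =>
    intro ρ hρ
    rw [iteratedDeriv_succ]
    have hev : iteratedDeriv k f =ᶠ[nhds ρ] D k := by
      filter_upwards [isOpen_Ioi.mem_nhds (show ρ ∈ Set.Ioi 0 from hρ)] with x hx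
      exact ih x hx
    rw [hev.deriv_eq]
    exact (h.2 k ρ hρ).deriv

lemma hasDerivAt_inv_pow (s ρ : ℝ) (h : s + ρ ≠ 0) (M : ℕ) :
    HasDerivAt (fun x : ℝ => ((s + x) ^ M)⁻¹) (-(M : ℝ) * ((s + ρ) ^ (M + 1))⁻¹) ρ := by
  have h1 : HasDerivAt (fun x : ℝ => s + x) 1 ρ := (hasDerivAt_id ρ).const_add s
  have h2 := (hasDerivAt_zpow (-(M : ℤ)) (s + ρ) (Or.inl h)).comp ρ h1
  have hfun : (fun x : ℝ => ((s + x) ^ M)⁻¹) = (fun y : ℝ => y ^ (-(M : ℤ))) ∘ fun x => s + x := by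
    funext x; simp [Function.comp, zpow_neg, zpow_natCast]
  rw [hfun]
  refine h2.congr_deriv ?_
  rw [mul_one]
  rw [show (-(M : ℤ) - 1) = -((M : ℤ) + 1) by ring, zpow_neg]
  rw [show ((M : ℤ) + 1) = ((M + 1 : ℕ) : ℤ) by push_cast; ring, zpow_natCast]
  push_cast
  ring

/-- The explicit derivative chain for the basic term `c / (s + ρ) ^ m`. -/
noncomputable def baseD (c s : ℝ) (m : ℕ) : ℕ → ℝ → ℝ := fun k ρ =>
  (-1 : ℝ) ^ k * (∏ j ∈ Finset.range k, ((m : ℝ) + j)) * c * ((s + ρ) ^ (m + k))⁻¹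

lemma hasIterOn_base (c s : ℝ) (hs : 0 < s) (m : ℕ) :
    HasIterOn (fun ρ => c / (s + ρ) ^ m) (baseD c s m) := by
  constructor
  · intro ρ hρ
    simp [baseD, div_eq_mul_inv]
  · intro k ρ hρ
    have hne : s + ρ ≠ 0 := by positivity
    have h := (hasDerivAt_inv_pow s ρ hne (m + k)).const_mul
      ((-1 : ℝ) ^ k * (∏ j ∈ Finset.range k, ((m : ℝ) + j)) * c)
    refine h.congr_deriv ?_
    simp only [baseD, Finset.prod_range_succ, pow_succ, show m + (k + 1) = m + k + 1 by ring]
    push_cast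
    ring

lemma baseD_sign (c s : ℝ) (hc : 0 ≤ c) (hs : 0 < s) (m k : ℕ) (ρ : ℝ) (hρ : 0 < ρ) :
    0 ≤ (-1 : ℝ) ^ k * baseD c s m k ρ := by
  unfold baseD
  rw [show (-1 : ℝ) ^ k * ((-1 : ℝ) ^ k * (∏ j ∈ Finset.range k, ((m : ℝ) + j)) * c *
      ((s + ρ) ^ (m + k))⁻¹)
    = ((-1 : ℝ) ^ k) ^ 2 * ((∏ j ∈ Finset.range k, ((m : ℝ) + j)) * c * ((s + ρ) ^ (m + k))⁻¹)
    by ring]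
  rw [← pow_mul, show k * 2 = 2 * k by ring, pow_mul, neg_one_sq, one_pow, one_mul]
  have hprod : 0 ≤ ∏ j ∈ Finset.range k, ((m : ℝ) + j) :=
    Finset.prod_nonneg fun j _ => by positivity
  positivity

lemma hasIterOn_sum {ι : Type*} (t : Finset ι) (f : ι → ℝ → ℝ) (D : ι → ℕ → ℝ → ℝ)
    (h : ∀ i ∈ t, HasIterOn (f i) (D i)) :
    HasIterOn (fun ρ => ∑ i ∈ t, f i ρ) (fun k ρ => ∑ i ∈ t, D i k ρ) := by
  refine ⟨fun ρ hρ => Finset.sum_congr rfl fun i hi => (h i hi).1 ρ hρ, ?_⟩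
  intro k ρ hρ
  exact HasDerivAt.fun_sum fun i hi => (h i hi).2 k ρ hρ

lemma HasIterOn.mul {f g : ℝ → ℝ} {Df Dg : ℕ → ℝ → ℝ}
    (hf : HasIterOn f Df) (hg : HasIterOn g Dg) :
    HasIterOn (fun ρ => f ρ * g ρ)
      (fun k ρ => ∑ i ∈ Finset.range (k + 1),
        (k.choose i : ℝ) * Df i ρ * Dg (k - i) ρ) := by
  constructor
  · intro ρ hρ
    simp [hf.1 ρ hρ, hg.1 ρ hρ]
  · intro k ρ hρ
    have hterm : ∀ i ∈ Finset.range (k + 1),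
        HasDerivAt (fun x => (k.choose i : ℝ) * Df i x * Dg (k - i) x)
          ((k.choose i : ℝ) * (Df (i + 1) ρ * Dg (k - i) ρ + Df i ρ * Dg (k - i + 1) ρ)) ρ := by
      intro i _
      have h1 := ((hf.2 i ρ hρ).fun_mul (hg.2 (k - i) ρ hρ)).const_mul (k.choose i : ℝ)
      have h2 : (fun x => (k.choose i : ℝ) * (Df i x * Dg (k - i) x))
          = fun x => (k.choose i : ℝ) * Df i x * Dg (k - i) x := by
        funext x; ring
      rw [h2] at h1
      exact h1
    have hsum := HasDerivAt.fun_sum hterm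
    refine hsum.congr_deriv ?_
    exact (leibniz_step (fun i => Df i ρ) (fun i => Dg i ρ) k).symm

theorem stmt_12 (n n₁ : ℕ) (hn : 1 ≤ n) (hn₁ : 1 ≤ n₁) (hn₁n : n₁ ≤ n)
    (σ b : ℕ → ℝ) (hσ : ∀ i < n, 0 < σ i) :
    ∀ (k : ℕ) (ρ : ℝ), 0 < ρ →
      0 ≤ (-1 : ℝ) ^ k * iteratedDeriv k (copraG₂ n n₁ σ b) ρ := by
  set β : ℝ := (n : ℝ) / n₁ with hβ
  have hβ1 : 1 ≤ β := by
    rw [hβ, le_div_iff₀ (by exact_mod_cast hn₁)]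
    simpa using (Nat.cast_le (α := ℝ)).2 hn₁n
  -- First factor
  have hF : HasIterOn (fun ρ => ∑ i ∈ Finset.range n, b i ^ 2 / (σ i ^ 2 + ρ) ^ 2)
      (fun k ρ => ∑ i ∈ Finset.range n, baseD (b i ^ 2) (σ i ^ 2) 2 k ρ) := by
    refine hasIterOn_sum _ _ _ fun i hi => ?_
    have := hσ i (Finset.mem_range.mp hi)
    exact hasIterOn_base _ _ (by positivity) 2
  -- Second factor: each term decomposes as σ²/(σ²+ρ) + (β−1)σ⁴/(σ²+ρ)²
  have hG : HasIterOn
      (fun ρ => ∑ j ∈ Finset.range n₁, σ j ^ 2 * (β * σ j ^ 2 + ρ) / (σ j ^ 2 + ρ) ^ 2)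
      (fun k ρ => ∑ j ∈ Finset.range n₁,
        (baseD (σ j ^ 2) (σ j ^ 2) 1 k ρ + baseD ((β - 1) * σ j ^ 4) (σ j ^ 2) 2 k ρ)) := by
    refine hasIterOn_sum _ _
      (fun j k ρ => baseD (σ j ^ 2) (σ j ^ 2) 1 k ρ + baseD ((β - 1) * σ j ^ 4) (σ j ^ 2) 2 k ρ)
      fun j hj => ?_
    have hσj := hσ j (lt_of_lt_of_le (Finset.mem_range.mp hj) hn₁n)
    have hsum : HasIterOn
        (fun ρ => σ j ^ 2 / (σ j ^ 2 + ρ) ^ 1 + (β - 1) * σ j ^ 4 / (σ j ^ 2 + ρ) ^ 2)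
        (fun k ρ => baseD (σ j ^ 2) (σ j ^ 2) 1 k ρ
          + baseD ((β - 1) * σ j ^ 4) (σ j ^ 2) 2 k ρ) := by
      have h1 := hasIterOn_base (σ j ^ 2) (σ j ^ 2) (by positivity) 1
      have h2 := hasIterOn_base ((β - 1) * σ j ^ 4) (σ j ^ 2) (by positivity) 2
      exact ⟨fun ρ hρ => by beta_reduce; rw [h1.1 ρ hρ, h2.1 ρ hρ],
        fun k ρ hρ => (h1.2 k ρ hρ).add (h2.2 k ρ hρ)⟩
    refine hsum.congr fun ρ hρ => ?_
    have hne : σ j ^ 2 + ρ ≠ 0 := by positivity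
    field_simp
    ring
  -- Product
  have hFG := hF.mul hG
  have hcopra : HasIterOn (copraG₂ n n₁ σ b)
      (fun k ρ => ∑ i ∈ Finset.range (k + 1), (k.choose i : ℝ)
        * (∑ i' ∈ Finset.range n, baseD (b i' ^ 2) (σ i' ^ 2) 2 i ρ)
        * (∑ j ∈ Finset.range n₁,
            (baseD (σ j ^ 2) (σ j ^ 2) 1 (k - i) ρ
              + baseD ((β - 1) * σ j ^ 4) (σ j ^ 2) 2 (k - i) ρ))) :=
    hFG.congr fun ρ hρ => rfl
  intro k ρ hρ
  rw [hcopra.iteratedDeriv_eq k ρ hρ]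
  rw [Finset.mul_sum]
  refine Finset.sum_nonneg fun i hi => ?_
  rw [Finset.mem_range] at hi
  have hik : i + (k - i) = k := by omega
  have hsgn : (-1 : ℝ) ^ k = (-1 : ℝ) ^ i * (-1 : ℝ) ^ (k - i) := by
    rw [← pow_add, hik]
  have hFs : 0 ≤ (-1 : ℝ) ^ i *
      ∑ i' ∈ Finset.range n, baseD (b i' ^ 2) (σ i' ^ 2) 2 i ρ := by
    rw [Finset.mul_sum]
    refine Finset.sum_nonneg fun i' hi' => ?_
    have := hσ i' (Finset.mem_range.mp hi')
    exact baseD_sign _ _ (by positivity) (by positivity) 2 i ρ hρ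
  have hGs : 0 ≤ (-1 : ℝ) ^ (k - i) *
      ∑ j ∈ Finset.range n₁,
        (baseD (σ j ^ 2) (σ j ^ 2) 1 (k - i) ρ
          + baseD ((β - 1) * σ j ^ 4) (σ j ^ 2) 2 (k - i) ρ) := by
    rw [Finset.mul_sum]
    refine Finset.sum_nonneg fun j hj => ?_
    have hσj := hσ j (lt_of_lt_of_le (Finset.mem_range.mp hj) hn₁n)
    have hβ' : 0 ≤ β - 1 := by linarith
    rw [mul_add]
    have s1 := baseD_sign (σ j ^ 2) (σ j ^ 2) (by positivity) (by positivity) 1 (k - i) ρ hρ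
    have s2 := baseD_sign ((β - 1) * σ j ^ 4) (σ j ^ 2) (by positivity) (by positivity)
      2 (k - i) ρ hρ
    linarith
  calc (0 : ℝ) ≤ ((k.choose i : ℝ))
      * (((-1 : ℝ) ^ i * ∑ i' ∈ Finset.range n, baseD (b i' ^ 2) (σ i' ^ 2) 2 i ρ)
        * ((-1 : ℝ) ^ (k - i) * ∑ j ∈ Finset.range n₁,
            (baseD (σ j ^ 2) (σ j ^ 2) 1 (k - i) ρ
              + baseD ((β - 1) * σ j ^ 4) (σ j ^ 2) 2 (k - i) ρ))) := by
        have : (0 : ℝ) ≤ (k.choose i : ℝ) := Nat.cast_nonneg _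
        positivity
    _ = _ := by rw [hsgn]; ring
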